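/- Let X be a nonempty set, F : X → X a map, and γ : X → ℝ a function with γ(x) > 0 for all x ∈ X. Then the cohomological equation φ(F x) − φ(x) = γ(x) has a solution φ : X → ℝ if and only if F has no periodic points, i.e. there is no x ∈ X and integer p ≥ 1 with F^p x = x. -/
import Mathlib


/-- For a strictly positive `γ`, the cohomological equation
`φ(F x) − φ(x) = γ(x)` has a solution iff `F` has no periodic points. -/
theorem cohomological_solvable_iff_no_periodic_points
    {X : Type*} [Nonempty X] (F : X → X) (γ : X → ℝ) (hγ : ∀ x, 0 < γ x) :
    (∃ φ : X → ℝ, ∀ x, φ (F x) - φ x = γ x) ↔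
      ¬ ∃ (x : X) (p : ℕ), 1 ≤ p ∧ F^[p] x = x := by
  classical
  constructor
  · rintro ⟨φ, hφ⟩ ⟨x, p, hp, hx⟩
    have key : ∀ nn : ℕ, φ (F^[nn] x) - φ x = ∑ i ∈ Finset.range nn, γ (F^[i] x) := by
      intro nn
      induction nn with
      | zero => simp
      | succ k ih =>
        have h2 := hφ (F^[k] x)
        rw [Finset.sum_range_succ, ← ih, Function.iterate_succ_apply']
        linarith
    have h0 := key p
    rw [hx] at h0
    have hpos : 0 < ∑ i ∈ Finset.range p, γ (F^[i] x) :=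
      Finset.sum_pos (fun i _ => hγ _) (by simp; omega)
    linarith
  · intro hnp
    -- no point is periodic, so iterates of a point are pairwise distinct
    have inj : ∀ (b : X) (k l : ℕ), F^[k] b = F^[l] b → k = l := by
      intro b k l h
      by_contra hne
      rcases Nat.lt_or_ge k l with hkl | hkl
      · exact hnp ⟨F^[k] b, l - k, by omega, by
          rw [← Function.iterate_add_apply, Nat.sub_add_cancel hkl.le, h]⟩
      · exact hnp ⟨F^[l] b, k - l, by omega, by
          rw [← Function.iterate_add_apply, Nat.sub_add_cancel hkl, ← h]⟩
    -- Birkhoff sums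
    set S : ℕ → X → ℝ := fun m x => ∑ i ∈ Finset.range m, γ (F^[i] x) with hS
    have Sadd : ∀ (k d : ℕ) (y : X), S (k + d) y = S k y + S d (F^[k] y) := by
      intro k d y
      induction d with
      | zero => simp [hS]
      | succ e ih =>
        have : k + (e + 1) = (k + e) + 1 := by omega
        rw [this]
        simp only [hS] at ih ⊢
        rw [Finset.sum_range_succ, Finset.sum_range_succ, ih]
        rw [← Function.iterate_add_apply]
        ring_nf
    have S1 : ∀ y : X, S 1 y = γ y := by intro y; simp [hS]
    -- the grand-orbit equivalence relation
    let s : Setoid X := ⟨fun x y => ∃ m n : ℕ, F^[m] x = F^[n] y,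
      ⟨fun x => ⟨0, 0, rfl⟩,
       fun ⟨m, n, h⟩ => ⟨n, m, h.symm⟩,
       fun {x y z} ⟨m, n, h1⟩ ⟨m', n', h2⟩ => ⟨m' + m, n + n', by
         rw [Function.iterate_add_apply, h1, ← Function.iterate_add_apply,
           Nat.add_comm m' n, Function.iterate_add_apply, h2,
           ← Function.iterate_add_apply]⟩⟩⟩
    let base : X → X := fun x => (Quotient.mk s x).out
    have hbase : ∀ x : X, ∃ m n : ℕ, F^[m] x = F^[n] (base x) := by
      intro x
      have h := Quotient.mk_out (s := s) x
      exact Setoid.symm h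
    have hbF : ∀ x : X, base (F x) = base x := by
      intro x
      show (Quotient.mk s (F x)).out = (Quotient.mk s x).out
      congr 1
      exact Quotient.sound ⟨0, 1, rfl⟩
    -- well-definedness
    have wd : ∀ (x b : X) (a c a' c' : ℕ), F^[a] x = F^[c] b → F^[a'] x = F^[c'] b →
        S c b - S a x = S c' b - S a' x := by
      have main : ∀ (x b : X) (a c a' c' : ℕ), a ≤ a' → F^[a] x = F^[c] b →
          F^[a'] x = F^[c'] b → S c b - S a x = S c' b - S a' x := by
        intro x b a c a' c' hle h1 h2
        have hkey : F^[a' - a] (F^[a] x) = F^[a'] x := by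
          rw [← Function.iterate_add_apply]
          congr 1
          omega
        have h3 : F^[c'] b = F^[c + (a' - a)] b := by
          rw [← h2, ← hkey, h1, ← Function.iterate_add_apply, Nat.add_comm]
        have hc' : c' = c + (a' - a) := inj b c' (c + (a' - a)) h3
        have e1 : S c' b = S c b + S (a' - a) (F^[c] b) := by rw [hc']; exact Sadd c (a' - a) b
        have e2 : S a' x = S a x + S (a' - a) (F^[a] x) := by
          have e2' := Sadd a (a' - a) x
          have hh : a + (a' - a) = a' := by omega
          rw [hh] at e2'
          exact e2'
        rw [e1, e2, h1]; ring
      intro x b a c a' c' h1 h2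
      rcases Nat.le_total a a' with hle | hle
      · exact main x b a c a' c' hle h1 h2
      · exact (main x b a' c' a c hle h2 h1).symm
    choose m n hmn using hbase
    refine ⟨fun x => S (n x) (base x) - S (m x) x, ?_⟩
    intro x
    have h1 : F^[m (F x) + 1] x = F^[n (F x)] (base x) := by
      rw [Function.iterate_succ_apply, hmn (F x), hbF]
    have h2 := wd x (base x) (m x) (n x) (m (F x) + 1) (n (F x)) (hmn x) h1
    have h3 : S (m (F x) + 1) x = γ x + S (m (F x)) (F x) := by
      have := Sadd 1 (m (F x)) x
      rw [S1 x] at this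
      rw [Nat.add_comm (m (F x)) 1] at *
      simpa using this
    have hb := hbF x
    show S (n (F x)) (base (F x)) - S (m (F x)) (F x) - (S (n x) (base x) - S (m x) x) = γ x
    rw [hb]
    linarith
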